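/- Let K(X) = (1/2)κ(tr(XᵀX)) with κ differentiable and κ'(u) ≤ 0 for all u ≥ 0, and suppose the denominator is nonzero. Then the mean-shift update Y^{(s+1)} = Y^{(s)} + M(Y^{(s)}), where M(Y) = [Σₙ κ'(h⁻² tr((Xₙ−Y)ᵀ(Xₙ−Y)))(Xₙ−Y)] / [Σₙ κ'(h⁻² tr((Xₙ−Y)ᵀ(Xₙ−Y)))], equals Y^{(s)} + α_s ∇f̂(Y^{(s)};h) with adaptive step size α_s = [−(1/(N h^{PT+2})) Σₙ κ'(h⁻² tr((Xₙ−Y^{(s)})ᵀ(Xₙ−Y^{(s)})))]⁻¹ ≥ 0; i.e. the matrix-variate mean-shift iteration is a gradient ascent step on f̂. -/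

import Mathlib

open scoped RealInnerProductSpace

lemma hasGradientAt_norm_sub_sq {F : Type*} [NormedAddCommGroup F] [InnerProductSpace ℝ F]
    [CompleteSpace F] (X Y : F) :
    HasGradientAt (fun Z : F => ‖X - Z‖ ^ 2) ((2:ℝ) • (Y - X)) Y := by
  rw [hasGradientAt_iff_hasFDerivAt, hasFDerivAt_iff_isLittleO]
  have key : ∀ Z : F, ‖X - Z‖ ^ 2 - ‖X - Y‖ ^ 2 -
      (InnerProductSpace.toDual ℝ F ((2:ℝ) • (Y - X))) (Z - Y) = ‖Z - Y‖ ^ 2 := by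
    intro Z
    have h1 : X - Z = X - Y - (Z - Y) := by abel
    have e1 := norm_sub_sq_real (X - Y) (Z - Y)
    have e2 : (inner ℝ (Y - X) (Z - Y) : ℝ) = -(inner ℝ (X - Y) (Z - Y) : ℝ) := by
      rw [← neg_sub X Y, inner_neg_left]
    rw [InnerProductSpace.toDual_apply_apply, real_inner_smul_left, h1, e1, e2]
    ring
  have ho : (fun Z : F => ‖Z - Y‖ ^ 2) =o[nhds Y] fun Z => Z - Y := by
    rw [Asymptotics.isLittleO_iff]
    intro ε hε
    filter_upwards [Metric.ball_mem_nhds Y hε] with Z hZ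
    rw [Metric.mem_ball, dist_eq_norm] at hZ
    have h0 : (0:ℝ) ≤ ‖Z - Y‖ := norm_nonneg _
    rw [Real.norm_eq_abs, abs_of_nonneg (by positivity)]
    nlinarith
  exact ho.congr (fun Z => (key Z).symm) (fun Z => rfl)



/-- With `K(X) = (1/2)κ(tr(XᵀX))`, `κ` differentiable with `κ' ≤ 0`, and
nonzero denominator, the mean-shift update `Y + M(Y)`, where
`M(Y) = [Σₙ κ'(h⁻²‖Xₙ-Y‖²)(Xₙ-Y)] / [Σₙ κ'(h⁻²‖Xₙ-Y‖²)]`, equals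
`Y + α • ∇f̂(Y;h)` with the adaptive step size
`α = [-(1/(N h^{PT+2})) Σₙ κ'(h⁻²‖Xₙ-Y‖²)]⁻¹ ≥ 0`: the matrix-variate mean shift is
a gradient ascent step on the KDE `f̂(X;h) = (1/(N h^{PT})) Σₙ K(h⁻¹(Xₙ - X))`
(matrices `ℝ^{P×T}` identified with the Euclidean space `ℝ^{PT}`). -/
theorem mean_shift_is_gradient_ascent (P T N : ℕ)
    (Xs : Fin N → EuclideanSpace ℝ (Fin P × Fin T)) (h : ℝ) (hh : 0 < h)
    (κ : ℝ → ℝ) (hκ : Differentiable ℝ κ)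
    (hκ' : ∀ u : ℝ, 0 ≤ u → deriv κ u ≤ 0)
    (Y : EuclideanSpace ℝ (Fin P × Fin T))
    (hden : (∑ n : Fin N, deriv κ (h ^ (-2 : ℤ) * ‖Xs n - Y‖ ^ 2)) ≠ 0) :
    let M : EuclideanSpace ℝ (Fin P × Fin T) :=
      (∑ n : Fin N, deriv κ (h ^ (-2 : ℤ) * ‖Xs n - Y‖ ^ 2))⁻¹ •
        (∑ n : Fin N, deriv κ (h ^ (-2 : ℤ) * ‖Xs n - Y‖ ^ 2) • (Xs n - Y))
    let α : ℝ :=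
      (-(1 / ((N : ℝ) * h ^ (P * T + 2))) *
        ∑ n : Fin N, deriv κ (h ^ (-2 : ℤ) * ‖Xs n - Y‖ ^ 2))⁻¹
    0 ≤ α ∧
    Y + M = Y + α • gradient (fun Z : EuclideanSpace ℝ (Fin P × Fin T) =>
        (1 / ((N : ℝ) * h ^ (P * T))) *
          ∑ n : Fin N, (1 / 2) * κ (‖(h : ℝ)⁻¹ • (Xs n - Z)‖ ^ 2)) Y := by
  intro M α
  have hh0 : h ≠ 0 := ne_of_gt hh
  have hN : N ≠ 0 := by rintro rfl; simp at hden
  have hNpos : (0:ℝ) < N := by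
    exact_mod_cast Nat.pos_of_ne_zero hN
  have ha : (0:ℝ) < h ^ (-2:ℤ) := by positivity
  have hnorm : ∀ v : EuclideanSpace ℝ (Fin P × Fin T),
      ‖(h:ℝ)⁻¹ • v‖ ^ 2 = h ^ (-2:ℤ) * ‖v‖ ^ 2 := by
    intro v
    rw [norm_smul, mul_pow, norm_inv, Real.norm_eq_abs, abs_of_pos hh]
    congr 1
    rw [show (-2:ℤ) = -(2:ℕ) by norm_num, zpow_neg, zpow_natCast, inv_pow]
  have hgrad : gradient (fun Z : EuclideanSpace ℝ (Fin P × Fin T) =>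
        (1 / ((N : ℝ) * h ^ (P * T))) *
          ∑ n : Fin N, (1 / 2) * κ (‖(h : ℝ)⁻¹ • (Xs n - Z)‖ ^ 2)) Y
      = (1 / ((N : ℝ) * h ^ (P * T))) • ∑ n : Fin N,
          ((1/2) * (deriv κ (h ^ (-2:ℤ) * ‖Xs n - Y‖ ^ 2) * h ^ (-2:ℤ))) •
            ((2:ℝ) • (Y - Xs n)) := by
    apply HasGradientAt.gradient
    rw [hasGradientAt_iff_hasFDerivAt]
    have hterm : ∀ n : Fin N, HasFDerivAt
        (fun Z : EuclideanSpace ℝ (Fin P × Fin T) => (1/2) * κ (‖(h:ℝ)⁻¹ • (Xs n - Z)‖ ^ 2))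
        (((1/2) * (deriv κ (h ^ (-2:ℤ) * ‖Xs n - Y‖ ^ 2) * h ^ (-2:ℤ))) •
          (InnerProductSpace.toDual ℝ _ ((2:ℝ) • (Y - Xs n)))) Y := by
      intro n
      have h1 : HasFDerivAt (fun Z : EuclideanSpace ℝ (Fin P × Fin T) => ‖Xs n - Z‖ ^ 2)
          (InnerProductSpace.toDual ℝ _ ((2:ℝ) • (Y - Xs n))) Y :=
        (hasGradientAt_norm_sub_sq (Xs n) Y).hasFDerivAt
      have h2 := h1.const_mul (h ^ (-2:ℤ))
      have h3 : HasDerivAt κ (deriv κ (h ^ (-2:ℤ) * ‖Xs n - Y‖ ^ 2))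
          (h ^ (-2:ℤ) * ‖Xs n - Y‖ ^ 2) := (hκ _).hasDerivAt
      have h4 := h3.comp_hasFDerivAt Y h2
      have h5 := h4.const_mul (1/2 : ℝ)
      have hfun : (fun Z : EuclideanSpace ℝ (Fin P × Fin T) =>
          (1/2) * κ (‖(h:ℝ)⁻¹ • (Xs n - Z)‖ ^ 2))
          = fun Z => (1/2) * κ (h ^ (-2:ℤ) * ‖Xs n - Z‖ ^ 2) := by
        funext Z; rw [hnorm]
      rw [hfun]
      refine h5.congr_fderiv ?_
      rw [smul_smul, smul_smul]
      congr 1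
      ring
    have hsum := HasFDerivAt.fun_sum (fun n (_ : n ∈ Finset.univ) => hterm n)
    have htot := hsum.const_mul (1 / ((N : ℝ) * h ^ (P * T)))
    refine htot.congr_fderiv ?_
    simp only [map_smul, map_sum]
  -- the sums
  set S : ℝ := ∑ n : Fin N, deriv κ (h ^ (-2:ℤ) * ‖Xs n - Y‖ ^ 2) with hS
  have hS_le : S ≤ 0 := Finset.sum_nonpos fun n _ => hκ' _ (by positivity)
  have hb : (0:ℝ) ≤ 1 / ((N : ℝ) * h ^ (P * T + 2)) := by positivity
  constructor
  · show (0:ℝ) ≤ (-(1 / ((N : ℝ) * h ^ (P * T + 2))) * S)⁻¹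
    apply inv_nonneg.2
    nlinarith [mul_nonneg hb (neg_nonneg.2 hS_le)]
  · show Y + S⁻¹ • (∑ n : Fin N, deriv κ (h ^ (-2:ℤ) * ‖Xs n - Y‖ ^ 2) • (Xs n - Y))
      = Y + (-(1 / ((N : ℝ) * h ^ (P * T + 2))) * S)⁻¹ • _
    rw [hgrad]
    congr 1
    have hca : (1 / ((N:ℝ) * h ^ (P * T))) * h ^ (-2:ℤ) = 1 / ((N:ℝ) * h ^ (P * T + 2)) := by
      rw [show (-2:ℤ) = -(2:ℕ) by norm_num, zpow_neg, zpow_natCast, pow_add]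
      field_simp
    have hkey : (-(1 / ((N : ℝ) * h ^ (P * T + 2))) * S)⁻¹ *
        ((1 / ((N:ℝ) * h ^ (P * T))) * h ^ (-2:ℤ)) = -S⁻¹ := by
      rw [hca]
      have hq : (0:ℝ) < 1 / ((N : ℝ) * h ^ (P * T + 2)) := by positivity
      rw [neg_mul, inv_neg, mul_inv]
      field_simp
    rw [Finset.smul_sum, Finset.smul_sum, Finset.smul_sum]
    refine Finset.sum_congr rfl fun n _ => ?_
    match_scalars <;>
      first
      | linear_combination (deriv κ (h ^ (-2:ℤ) * ‖Xs n - Y‖ ^ 2)) * hkey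
      | linear_combination (-(deriv κ (h ^ (-2:ℤ) * ‖Xs n - Y‖ ^ 2))) * hkey
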